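/- The Tsallis entropy Ts_α(p) = (1/(α-1))(1 - p^α - (1-p)^α) satisfies the α-deformed associativity condition: for all p₁, p₂, p₃ ≥ 0 with p₁ + p₂ + p₃ = 1, p₁ < 1 and p₁ + p₂ > 0, Ts_α(p₁) + (1 - p₁)^α · Ts_α(p₂/(1 - p₁)) = Ts_α(p₁ + p₂) + (p₁ + p₂)^α · Ts_α(p₁/(p₁ + p₂)). -/

import Mathlib

/-- Binary Tsallis entropy. -/
noncomputable def Ts (α p : ℝ) : ℝ := (1 / (α - 1)) * (1 - p ^ α - (1 - p) ^ α)

lemma rpow_mul_div_rpow (α b x : ℝ) (hb : 0 < b) (hx : 0 ≤ x) :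
    b ^ α * (x / b) ^ α = x ^ α := by
  rw [Real.div_rpow hx hb.le, mul_div_cancel₀]
  exact ne_of_gt (Real.rpow_pos_of_pos hb α)

/-- The Tsallis entropy satisfies the `α`-deformed associativity condition. -/
theorem tsallis_alpha_associativity (α p₁ p₂ p₃ : ℝ)
    (hα : 0 < α) (hα1 : α ≠ 1)
    (h1 : 0 ≤ p₁) (h2 : 0 ≤ p₂) (h3 : 0 ≤ p₃)
    (hsum : p₁ + p₂ + p₃ = 1) (hlt : p₁ < 1) (hpos : 0 < p₁ + p₂) :
    Ts α p₁ + (1 - p₁) ^ α * Ts α (p₂ / (1 - p₁)) =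
      Ts α (p₁ + p₂) + (p₁ + p₂) ^ α * Ts α (p₁ / (p₁ + p₂)) := by
  have hb : 0 < 1 - p₁ := by linarith
  have e1 : 1 - p₂ / (1 - p₁) = p₃ / (1 - p₁) := by
    field_simp; linarith
  have e2 : 1 - p₁ / (p₁ + p₂) = p₂ / (p₁ + p₂) := by
    field_simp; ring
  have e3 : (1 : ℝ) - (p₁ + p₂) = p₃ := by linarith
  have k1 := rpow_mul_div_rpow α _ p₂ hb h2
  have k2 := rpow_mul_div_rpow α _ p₃ hb h3
  have k3 := rpow_mul_div_rpow α _ p₁ hpos h1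
  have k4 := rpow_mul_div_rpow α _ p₂ hpos h2
  unfold Ts
  rw [e1, e2, e3]
  linear_combination (1/(α-1)) * (k3 + k4 - k1 - k2)
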